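/- Let β₂ be a satisfiable finite set of atomic comparisons over V, let c₀ be a real constant, and let Y₁, …, Yₖ be variables in V. If every assignment satisfying β₂ satisfies Yᵢ = c₀ for at least one i, then there exists a single i such that every assignment satisfying β₂ satisfies Yᵢ = c₀. -/
import Mathlib


namespace QC

/-- A term is a variable in `V` or a real constant. -/
inductive Term (V : Type) where
  | var : V → Term V
  | const : ℝ → Term V

/-- The comparison relations `<, ≤, =, ≠`. -/
inductive Rel where
  | lt | le | eq | ne

/-- A comparison between two terms.  (`x ≥ c` is represented as `c ≤ x`, etc.) -/
structure Comp (V : Type) where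
  rel : Rel
  lhs : Term V
  rhs : Term V

def Term.eval {V : Type} (σ : V → ℝ) : Term V → ℝ
  | .var x => σ x
  | .const c => c

def Rel.holds : Rel → ℝ → ℝ → Prop
  | .lt => fun a b => a < b
  | .le => fun a b => a ≤ b
  | .eq => fun a b => a = b
  | .ne => fun a b => a ≠ b

/-- An assignment `σ : V → ℝ` satisfies a comparison. -/
def Comp.holds {V : Type} (a : Comp V) (σ : V → ℝ) : Prop :=
  a.rel.holds (a.lhs.eval σ) (a.rhs.eval σ)

def Term.isVar {V : Type} : Term V → Prop
  | .var _ => True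
  | .const _ => False

/-- An atomic comparison: at least one side is a variable. -/
def IsAC {V : Type} (a : Comp V) : Prop := a.lhs.isVar ∨ a.rhs.isVar

/-- `σ` satisfies every comparison in the finite set `F`. -/
def Sat {V : Type} (F : Finset (Comp V)) (σ : V → ℝ) : Prop := ∀ a ∈ F, a.holds σ

/-- zeros of a nontrivial affine function -/
lemma zeroSub (u₀ u₁ : ℝ) (h : u₀ ≠ 0 ∨ u₁ ≠ 0) :
    {t : ℝ | (1-t)*u₀ + t*u₁ = 0}.Subsingleton := by
  intro s hs t ht
  simp only [Set.mem_setOf_eq] at hs ht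
  by_contra hne
  have h1 : (s - t) * (u₁ - u₀) = 0 := by linear_combination hs - ht
  rcases mul_eq_zero.mp h1 with h2 | h2
  · exact hne (by linarith)
  · have h3 : u₀ = u₁ := by linarith
    have h4 : u₀ = 0 := by linear_combination hs + s * h3
    rcases h with h | h
    · exact h h4
    · exact h (h3 ▸ h4)

lemma eval_mix {V : Type} (σ τ : V → ℝ) (t : ℝ) (T : Term V) :
    T.eval (fun x => (1-t)*σ x + t*τ x) = (1-t)*T.eval σ + t*T.eval τ := by
  cases T <;> simp [Term.eval] <;> ring

/-- the mixing bad set of a single comparison -/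
def bad {V : Type} (σ τ : V → ℝ) (a : Comp V) : Set ℝ :=
  match a.rel with
  | .ne => {t : ℝ | (1-t)*(a.lhs.eval σ - a.rhs.eval σ) + t*(a.lhs.eval τ - a.rhs.eval τ) = 0}
  | _ => ∅

lemma bad_finite {V : Type} (σ τ : V → ℝ) (a : Comp V) (hσ : a.holds σ) :
    (bad σ τ a).Finite := by
  rcases a with ⟨r, L, R⟩
  cases r
  · exact Set.finite_empty
  · exact Set.finite_empty
  · exact Set.finite_empty
  · apply Set.Subsingleton.finite
    apply zeroSub
    left
    simp only [Comp.holds, Rel.holds] at hσ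
    exact sub_ne_zero_of_ne hσ

/-- mixing preserves satisfaction away from the bad set -/
lemma holds_mix {V : Type} (σ τ : V → ℝ) (a : Comp V) (hσ : a.holds σ) (hτ : a.holds τ)
    (t : ℝ) (ht0 : 0 < t) (ht1 : t < 1) (hb : t ∉ bad σ τ a) :
    a.holds (fun x => (1-t)*σ x + t*τ x) := by
  rcases a with ⟨r, L, R⟩
  simp only [Comp.holds, eval_mix] at *
  cases r
  · simp only [Rel.holds] at *
    have h1 : (1-t)*L.eval σ < (1-t)*R.eval σ := by nlinarith
    have h2 : t*L.eval τ < t*R.eval τ := by nlinarith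
    linarith
  · simp only [Rel.holds] at *
    have h1 : (1-t)*L.eval σ ≤ (1-t)*R.eval σ := by nlinarith
    have h2 : t*L.eval τ ≤ t*R.eval τ := by nlinarith
    linarith
  · simp only [Rel.holds] at *
    rw [hσ, hτ]
  · simp only [Rel.holds] at *
    simp only [bad, Set.mem_setOf_eq] at hb
    intro hc
    exact hb (by linarith [hc] <;> skip)

lemma mix {V : Type} (F : Finset (Comp V)) (σ τ : V → ℝ) (hσ : Sat F σ) (hτ : Sat F τ)
    (c : ℝ) (Z : Finset V) (hZ : ∀ x ∈ Z, σ x ≠ c) (Q : V) (hQ : τ Q ≠ c) :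
    ∃ ρ : V → ℝ, Sat F ρ ∧ (∀ x ∈ Z, ρ x ≠ c) ∧ ρ Q ≠ c := by
  classical
  set B : Set ℝ :=
    (⋃ a ∈ (F : Set (Comp V)), bad σ τ a) ∪
    ((⋃ x ∈ (Z : Set V), {t : ℝ | (1-t)*(σ x - c) + t*(τ x - c) = 0}) ∪
     {t : ℝ | (1-t)*(σ Q - c) + t*(τ Q - c) = 0}) with hB
  have hBfin : B.Finite := by
    refine Set.Finite.union ?_ (Set.Finite.union ?_ ?_)
    · exact Set.Finite.biUnion F.finite_toSet (fun a ha => bad_finite σ τ a (hσ a ha))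
    · exact Set.Finite.biUnion Z.finite_toSet
        (fun x hx => Set.Subsingleton.finite (zeroSub _ _ (Or.inl (sub_ne_zero_of_ne (hZ x hx)))))
    · exact Set.Subsingleton.finite (zeroSub _ _ (Or.inr (sub_ne_zero_of_ne hQ)))
  have hinf : (Set.Ioo (0:ℝ) 1).Infinite := Set.Ioo_infinite (by norm_num)
  obtain ⟨t, ht⟩ := (hinf.diff hBfin).nonempty
  obtain ⟨⟨ht0, ht1⟩, htB⟩ := ht
  refine ⟨fun x => (1-t)*σ x + t*τ x, ?_, ?_, ?_⟩
  · intro a ha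
    refine holds_mix σ τ a (hσ a ha) (hτ a ha) t ht0 ht1 ?_
    intro hb
    exact htB (Or.inl (Set.mem_biUnion ha hb))
  · intro x hx hc
    have hc' : (1-t)*σ x + t*τ x = c := hc
    apply htB
    refine Or.inr (Or.inl (Set.mem_biUnion hx ?_))
    show (1-t)*(σ x - c) + t*(τ x - c) = 0
    linear_combination hc'
  · intro hc
    have hc' : (1-t)*σ Q + t*τ Q = c := hc
    apply htB
    refine Or.inr (Or.inr ?_)
    show (1-t)*(σ Q - c) + t*(τ Q - c) = 0
    linear_combination hc'


/-- if a satisfiable `β₂` entails the disjunction of the equalities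
`Yᵢ = c₀`, then it entails a single one of them. -/
theorem stmt13 {V : Type} (β₂ : Finset (Comp V))
    (hAC : ∀ a ∈ β₂, IsAC a)
    (hsat : ∃ σ : V → ℝ, Sat β₂ σ)
    (c₀ : ℝ) (k : ℕ) (Y : Fin k → V)
    (hent : ∀ σ : V → ℝ, Sat β₂ σ → ∃ i, σ (Y i) = c₀) :
    ∃ i, ∀ σ : V → ℝ, Sat β₂ σ → σ (Y i) = c₀ := by
  classical
  by_contra hcon
  push_neg at hcon
  -- for each i, an assignment violating Y i = c₀
  have key : ∀ n : ℕ, ∃ σ : V → ℝ, Sat β₂ σ ∧ ∀ i : Fin k, (i : ℕ) < n → σ (Y i) ≠ c₀ := by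
    intro n
    induction n with
    | zero => obtain ⟨σ, hσ⟩ := hsat; exact ⟨σ, hσ, fun i hi => absurd hi (by omega)⟩
    | succ n ih =>
      obtain ⟨σ, hσ, hσne⟩ := ih
      by_cases hn : n < k
      · obtain ⟨τ, hτ, hτne⟩ := hcon ⟨n, hn⟩
        obtain ⟨ρ, hρ, hρZ, hρQ⟩ := mix β₂ σ τ hσ hτ c₀
          ((Finset.univ.filter (fun i : Fin k => (i : ℕ) < n)).image Y)
          (by
            intro x hx
            simp only [Finset.mem_image, Finset.mem_filter, Finset.mem_univ, true_and] at hx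
            obtain ⟨i, hi, rfl⟩ := hx
            exact hσne i hi)
          (Y ⟨n, hn⟩) hτne
        refine ⟨ρ, hρ, ?_⟩
        intro i hi
        rcases lt_or_eq_of_le (Nat.lt_succ_iff.mp hi) with h | h
        · exact hρZ (Y i) (Finset.mem_image_of_mem Y (by simp [h]))
        · have : i = ⟨n, hn⟩ := Fin.ext h
          rw [this]; exact hρQ
      · exact ⟨σ, hσ, fun i _ => hσne i (by omega)⟩
  obtain ⟨σ, hσ, hne⟩ := key k
  obtain ⟨i, hi⟩ := hent σ hσ
  exact hne i i.isLt hi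

end QC
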